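/- (Deterministic form of Lemma E.1.) Let Σ and Σ̂ be symmetric positive definite d×d real matrices and let μ, μ̂, x ∈ ℝ^d. Write Δμ = μ̂ − μ, ‖v‖_{Σ⁻¹} = √(vᵀΣ⁻¹v), and ‖·‖_op for the operator norm induced by the Euclidean norm. Then |(x−μ)ᵀΣ⁻¹(x−μ) − (x−μ̂)ᵀΣ̂⁻¹(x−μ̂)| ≤ 2‖Δμ‖_{Σ⁻¹}·‖x−μ‖_{Σ⁻¹} + ‖Δμ‖_{Σ⁻¹}² + 2(‖x−μ‖₂² + ‖Δμ‖₂²)·‖Σ̂⁻¹ − Σ⁻¹‖_op. -/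

import Mathlib

open Matrix Real

/-- The Euclidean (ℓ₂) norm of a vector in `Fin d → ℝ`. -/
noncomputable def l2norm {d : ℕ} (v : Fin d → ℝ) : ℝ :=
  Real.sqrt (v ⬝ᵥ v)

/-- The norm `‖v‖_{Σ⁻¹} = √(vᵀ Σ⁻¹ v)` induced by the inverse of a positive definite matrix. -/
noncomputable def invNorm {d : ℕ} (S : Matrix (Fin d) (Fin d) ℝ) (v : Fin d → ℝ) : ℝ :=
  Real.sqrt (v ⬝ᵥ (S⁻¹ *ᵥ v))

/-- The operator norm of a matrix with respect to the Euclidean norm, as the supremum of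
`‖M v‖₂` over the closed Euclidean unit ball. -/
noncomputable def opNorm {d : ℕ} (M : Matrix (Fin d) (Fin d) ℝ) : ℝ :=
  ⨆ v : {v : Fin d → ℝ // v ⬝ᵥ v ≤ 1}, l2norm (M *ᵥ (v : Fin d → ℝ))

lemma dot_self_nonneg' {d : ℕ} (v : Fin d → ℝ) : 0 ≤ v ⬝ᵥ v :=
  Finset.sum_nonneg fun _ _ => mul_self_nonneg _

lemma l2norm_nonneg {d : ℕ} (v : Fin d → ℝ) : 0 ≤ l2norm v := Real.sqrt_nonneg _

lemma l2norm_sq {d : ℕ} (v : Fin d → ℝ) : l2norm v ^ 2 = v ⬝ᵥ v :=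
  Real.sq_sqrt (dot_self_nonneg' v)

lemma sq_le_dot {d : ℕ} (v : Fin d → ℝ) (j : Fin d) : v j * v j ≤ v ⬝ᵥ v := by
  have := Finset.single_le_sum (f := fun i => v i * v i)
    (fun i _ => mul_self_nonneg (v i)) (Finset.mem_univ j)
  simpa [dotProduct] using this

lemma l2norm_smul {d : ℕ} (c : ℝ) (w : Fin d → ℝ) : l2norm (c • w) = |c| * l2norm w := by
  have h : (c • w) ⬝ᵥ (c • w) = c ^ 2 * (w ⬝ᵥ w) := by
    simp [smul_dotProduct, dotProduct_smul, smul_eq_mul]; ring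
  unfold l2norm
  rw [h, Real.sqrt_mul (sq_nonneg c), Real.sqrt_sq_eq_abs]

/-- Cauchy–Schwarz for the dot product. -/
lemma abs_dot_le {d : ℕ} (v w : Fin d → ℝ) : |v ⬝ᵥ w| ≤ l2norm v * l2norm w := by
  have h := Real.sum_mul_le_sqrt_mul_sqrt Finset.univ (fun i => |v i|) (fun i => |w i|)
  have h1 : |v ⬝ᵥ w| ≤ ∑ i, |v i| * |w i| := by
    refine (Finset.abs_sum_le_sum_abs _ _).trans ?_
    simp [abs_mul, le_refl]
  refine h1.trans (h.trans_eq ?_)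
  unfold l2norm dotProduct
  congr 2 <;> · congr 1; funext i; rw [sq_abs]; ring

lemma l2norm_mulVec_le {d : ℕ} (M : Matrix (Fin d) (Fin d) ℝ) (v : Fin d → ℝ) :
    l2norm (M *ᵥ v) ≤ opNorm M * l2norm v := by
  have hbdd : BddAbove (Set.range fun u : {u : Fin d → ℝ // u ⬝ᵥ u ≤ 1} =>
      l2norm (M *ᵥ (u : Fin d → ℝ))) := by
    refine ⟨Real.sqrt (∑ i, (∑ j, |M i j|) ^ 2), ?_⟩
    rintro y ⟨⟨u, hu⟩, rfl⟩
    have habs : ∀ j, |u j| ≤ 1 := by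
      intro j
      have h2 := (sq_le_dot u j).trans hu
      nlinarith [abs_nonneg (u j), sq_abs (u j)]
    refine Real.sqrt_le_sqrt ?_
    unfold dotProduct
    refine Finset.sum_le_sum fun i _ => ?_
    have h1 : |(M *ᵥ u) i| ≤ ∑ j, |M i j| := by
      have hmv : (M *ᵥ u) i = ∑ j, M i j * u j := by
        simp [Matrix.mulVec, dotProduct]
      rw [hmv]
      refine (Finset.abs_sum_le_sum_abs _ _).trans (Finset.sum_le_sum fun j _ => ?_)
      rw [abs_mul]
      calc |M i j| * |u j| ≤ |M i j| * 1 :=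
            mul_le_mul_of_nonneg_left (habs j) (abs_nonneg _)
        _ = |M i j| := mul_one _
    calc (M *ᵥ u) i * (M *ᵥ u) i = |(M *ᵥ u) i| ^ 2 := by rw [sq_abs]; ring
      _ ≤ (∑ j, |M i j|) ^ 2 := pow_le_pow_left₀ (abs_nonneg _) h1 2
  rcases eq_or_ne (l2norm v) 0 with hv | hv
  · have hv0 : v = 0 := by
      have h0 : v ⬝ᵥ v = 0 := by
        have := l2norm_sq v; rw [hv] at this; simpa using this.symm
      funext i
      show v i = 0
      have h2 : v i * v i ≤ 0 := by rw [← h0]; exact sq_le_dot v i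
      nlinarith [mul_self_nonneg (v i)]
    simp [hv0, l2norm, hv]
  · have hvpos : 0 < l2norm v := lt_of_le_of_ne (l2norm_nonneg v) (Ne.symm hv)
    set u : Fin d → ℝ := (l2norm v)⁻¹ • v with hu
    have huball : u ⬝ᵥ u ≤ 1 := by
      have h3 : u ⬝ᵥ u = (l2norm v)⁻¹ ^ 2 * (v ⬝ᵥ v) := by
        simp [hu, smul_dotProduct, dotProduct_smul, smul_eq_mul]; ring
      rw [h3, ← l2norm_sq v]
      rw [inv_pow]
      rw [inv_mul_le_iff₀ (by positivity)]
      simp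
    have hle : l2norm (M *ᵥ u) ≤ opNorm M := le_ciSup hbdd ⟨u, huball⟩
    have hMu : M *ᵥ u = (l2norm v)⁻¹ • (M *ᵥ v) := by
      rw [hu, Matrix.mulVec_smul]
    rw [hMu, l2norm_smul, abs_of_nonneg (by positivity)] at hle
    calc l2norm (M *ᵥ v) = (l2norm v) * ((l2norm v)⁻¹ * l2norm (M *ᵥ v)) := by
          field_simp
      _ ≤ (l2norm v) * opNorm M := mul_le_mul_of_nonneg_left hle (le_of_lt hvpos)
      _ = opNorm M * l2norm v := mul_comm _ _

lemma abs_quad_le {d : ℕ} (M : Matrix (Fin d) (Fin d) ℝ) (v : Fin d → ℝ) :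
    |v ⬝ᵥ (M *ᵥ v)| ≤ opNorm M * (v ⬝ᵥ v) := by
  calc |v ⬝ᵥ (M *ᵥ v)| ≤ l2norm v * l2norm (M *ᵥ v) := abs_dot_le v (M *ᵥ v)
    _ ≤ l2norm v * (opNorm M * l2norm v) :=
        mul_le_mul_of_nonneg_left (l2norm_mulVec_le M v) (l2norm_nonneg v)
    _ = opNorm M * (l2norm v * l2norm v) := by ring
    _ = opNorm M * (v ⬝ᵥ v) := by rw [← l2norm_sq v]; ring_nf

open scoped MatrixOrder in
/-- Cauchy–Schwarz for a positive semidefinite quadratic form. -/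
lemma abs_dot_pd_le {d : ℕ} {A : Matrix (Fin d) (Fin d) ℝ} (hA : A.PosSemidef)
    (v w : Fin d → ℝ) :
    |v ⬝ᵥ (A *ᵥ w)| ≤ Real.sqrt (v ⬝ᵥ (A *ᵥ v)) * Real.sqrt (w ⬝ᵥ (A *ᵥ w)) := by
  set C := CFC.sqrt A with hC
  have hCps : C.PosSemidef := (CFC.sqrt_nonneg A).posSemidef
  have hCsym : Cᵀ = C := by
    have := hCps.isHermitian
    simpa [Matrix.IsHermitian, Matrix.conjTranspose_eq_transpose_of_trivial] using this
  have hsq : C * C = A := CFC.sqrt_mul_sqrt_self A hA.nonneg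
  have key : ∀ a b : Fin d → ℝ, a ⬝ᵥ (A *ᵥ b) = (C *ᵥ a) ⬝ᵥ (C *ᵥ b) := by
    intro a b
    rw [← hsq, ← Matrix.mulVec_mulVec, Matrix.dotProduct_mulVec a C,
      ← Matrix.mulVec_transpose, hCsym]
  rw [key v w, key v v, key w w]
  calc |(C *ᵥ v) ⬝ᵥ (C *ᵥ w)| ≤ l2norm (C *ᵥ v) * l2norm (C *ᵥ w) := abs_dot_le _ _
    _ = _ := rfl

lemma decomp_quad {d : ℕ} (A B : Matrix (Fin d) (Fin d) ℝ)
    (hsymm : ∀ u w : Fin d → ℝ, u ⬝ᵥ (A *ᵥ w) = w ⬝ᵥ (A *ᵥ u)) (a δ : Fin d → ℝ) :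
    a ⬝ᵥ (A *ᵥ a) - (a - δ) ⬝ᵥ (B *ᵥ (a - δ))
      = (2 * (a ⬝ᵥ (A *ᵥ δ)) - δ ⬝ᵥ (A *ᵥ δ))
        - ((a - δ) ⬝ᵥ ((B - A) *ᵥ (a - δ))) := by
  simp only [Matrix.sub_mulVec, Matrix.mulVec_sub, dotProduct_sub,
    sub_dotProduct]
  rw [hsymm δ a]
  ring

lemma dot_sub_le {d : ℕ} (a δ : Fin d → ℝ) :
    (a - δ) ⬝ᵥ (a - δ) ≤ 2 * (a ⬝ᵥ a + δ ⬝ᵥ δ) := by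
  have hsum : 0 ≤ (a + δ) ⬝ᵥ (a + δ) := dot_self_nonneg' _
  have e1 : (a - δ) ⬝ᵥ (a - δ) = a ⬝ᵥ a - 2 * (a ⬝ᵥ δ) + δ ⬝ᵥ δ := by
    simp only [dotProduct_sub, sub_dotProduct, dotProduct_comm δ a]
    ring
  have e2 : (a + δ) ⬝ᵥ (a + δ) = a ⬝ᵥ a + 2 * (a ⬝ᵥ δ) + δ ⬝ᵥ δ := by
    simp only [dotProduct_add, add_dotProduct, dotProduct_comm δ a]
    ring
  linarith [e1, e2, hsum]

theorem stmt8 {d : ℕ} (S Shat : Matrix (Fin d) (Fin d) ℝ)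
    (hS : S.PosDef) (hShat : Shat.PosDef) (μ μhat x : Fin d → ℝ) :
    |(x - μ) ⬝ᵥ (S⁻¹ *ᵥ (x - μ)) - (x - μhat) ⬝ᵥ (Shat⁻¹ *ᵥ (x - μhat))| ≤
      2 * invNorm S (μhat - μ) * invNorm S (x - μ) + invNorm S (μhat - μ) ^ 2 +
        2 * (l2norm (x - μ) ^ 2 + l2norm (μhat - μ) ^ 2) * opNorm (Shat⁻¹ - S⁻¹) := by
  have hA : (S⁻¹).PosDef := hS.inv
  have hAsym : (S⁻¹)ᵀ = S⁻¹ := by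
    have := hA.isHermitian
    simpa [Matrix.IsHermitian, Matrix.conjTranspose_eq_transpose_of_trivial] using this
  have hsymm : ∀ u w : Fin d → ℝ, u ⬝ᵥ (S⁻¹ *ᵥ w) = w ⬝ᵥ (S⁻¹ *ᵥ u) := by
    intro u w
    rw [Matrix.dotProduct_mulVec u S⁻¹, ← Matrix.mulVec_transpose, hAsym,
      dotProduct_comm]
  set a := x - μ with ha
  set δ := μhat - μ with hδ
  have haδ : x - μhat = a - δ := by rw [ha, hδ]; abel
  rw [haδ, decomp_quad S⁻¹ Shat⁻¹ hsymm a δ]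
  have h1 : |2 * (a ⬝ᵥ (S⁻¹ *ᵥ δ)) - δ ⬝ᵥ (S⁻¹ *ᵥ δ)|
      ≤ 2 * invNorm S δ * invNorm S a + invNorm S δ ^ 2 := by
    have hcs : |a ⬝ᵥ (S⁻¹ *ᵥ δ)| ≤ invNorm S a * invNorm S δ :=
      abs_dot_pd_le hA.posSemidef a δ
    have h0 : 0 ≤ δ ⬝ᵥ (S⁻¹ *ᵥ δ) := by
      have := hA.posSemidef.dotProduct_mulVec_nonneg δ
      simpa using this
    have hδδ : δ ⬝ᵥ (S⁻¹ *ᵥ δ) = invNorm S δ ^ 2 := by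
      rw [invNorm, Real.sq_sqrt h0]
    calc |2 * (a ⬝ᵥ (S⁻¹ *ᵥ δ)) - δ ⬝ᵥ (S⁻¹ *ᵥ δ)|
        ≤ 2 * |a ⬝ᵥ (S⁻¹ *ᵥ δ)| + |δ ⬝ᵥ (S⁻¹ *ᵥ δ)| := by
          calc _ ≤ |2 * (a ⬝ᵥ (S⁻¹ *ᵥ δ))| + |δ ⬝ᵥ (S⁻¹ *ᵥ δ)| := abs_sub _ _
            _ = 2 * |a ⬝ᵥ (S⁻¹ *ᵥ δ)| + |δ ⬝ᵥ (S⁻¹ *ᵥ δ)| := by rw [abs_mul]; norm_num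
      _ ≤ 2 * (invNorm S a * invNorm S δ) + invNorm S δ ^ 2 := by
          rw [abs_of_nonneg h0, hδδ]
          linarith [hcs]
      _ = 2 * invNorm S δ * invNorm S a + invNorm S δ ^ 2 := by ring
  have h2 : |(a - δ) ⬝ᵥ ((Shat⁻¹ - S⁻¹) *ᵥ (a - δ))|
      ≤ 2 * (l2norm a ^ 2 + l2norm δ ^ 2) * opNorm (Shat⁻¹ - S⁻¹) := by
    have hq := abs_quad_le (Shat⁻¹ - S⁻¹) (a - δ)
    have hop : 0 ≤ opNorm (Shat⁻¹ - S⁻¹) := Real.iSup_nonneg fun u => l2norm_nonneg _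
    have hsmall : (a - δ) ⬝ᵥ (a - δ) ≤ 2 * (l2norm a ^ 2 + l2norm δ ^ 2) := by
      rw [l2norm_sq, l2norm_sq]
      exact dot_sub_le a δ
    calc |(a - δ) ⬝ᵥ ((Shat⁻¹ - S⁻¹) *ᵥ (a - δ))|
        ≤ opNorm (Shat⁻¹ - S⁻¹) * ((a - δ) ⬝ᵥ (a - δ)) := hq
      _ ≤ opNorm (Shat⁻¹ - S⁻¹) * (2 * (l2norm a ^ 2 + l2norm δ ^ 2)) :=
          mul_le_mul_of_nonneg_left hsmall hop
      _ = 2 * (l2norm a ^ 2 + l2norm δ ^ 2) * opNorm (Shat⁻¹ - S⁻¹) := by ring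
  calc |(2 * (a ⬝ᵥ (S⁻¹ *ᵥ δ)) - δ ⬝ᵥ (S⁻¹ *ᵥ δ))
        - ((a - δ) ⬝ᵥ ((Shat⁻¹ - S⁻¹) *ᵥ (a - δ)))|
      ≤ |2 * (a ⬝ᵥ (S⁻¹ *ᵥ δ)) - δ ⬝ᵥ (S⁻¹ *ᵥ δ)|
          + |(a - δ) ⬝ᵥ ((Shat⁻¹ - S⁻¹) *ᵥ (a - δ))| := abs_sub _ _
    _ ≤ _ := add_le_add h1 h2
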